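/- Let G be a finite group such that P_{x,y,z∈G}([x,y,z]=1) ≥ ε. Then there exists z₀ ∈ G such that P_{x,y∈G, z∈G'}([x,y,zz₀] = 1) ≥ ε, and consequently P_{x,y∈G, z∈G'}([x,y,z]=1) ≥ ε. -/

import Mathlib

open Finset

private lemma cond_iff' {G : Type*} [Group G] (a u : G) :
    a⁻¹ * u⁻¹ * a * u = 1 ↔ Commute a u := by
  have h : a⁻¹ * u⁻¹ * a * u = (u * a)⁻¹ * (a * u) := by group
  rw [h, inv_mul_eq_one, commute_iff_eq, eq_comm]

theorem stmt_16 {G : Type*} [Group G] [Finite G] (ε : ℝ)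
    (hhom : ∀ x y : G, ∀ z ∈ commutator G, ∀ w ∈ commutator G,
      (x⁻¹ * y⁻¹ * x * y)⁻¹ * (z * w)⁻¹ * (x⁻¹ * y⁻¹ * x * y) * (z * w) =
        ((x⁻¹ * y⁻¹ * x * y)⁻¹ * z⁻¹ * (x⁻¹ * y⁻¹ * x * y) * z) *
        ((x⁻¹ * y⁻¹ * x * y)⁻¹ * w⁻¹ * (x⁻¹ * y⁻¹ * x * y) * w))
    (hd : ε * (Nat.card G : ℝ) ^ 3 ≤
      (Nat.card {t : G × G × G //
        (t.1⁻¹ * t.2.1⁻¹ * t.1 * t.2.1)⁻¹ * t.2.2⁻¹ *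
          (t.1⁻¹ * t.2.1⁻¹ * t.1 * t.2.1) * t.2.2 = 1} : ℝ)) :
    (∃ z₀ : G, ε * ((Nat.card G : ℝ) ^ 2 * (Nat.card (commutator G) : ℝ)) ≤
      (Nat.card {t : G × G × (commutator G) //
        (t.1⁻¹ * t.2.1⁻¹ * t.1 * t.2.1)⁻¹ * ((t.2.2 : G) * z₀)⁻¹ *
          (t.1⁻¹ * t.2.1⁻¹ * t.1 * t.2.1) * ((t.2.2 : G) * z₀) = 1} : ℝ)) ∧
    ε * ((Nat.card G : ℝ) ^ 2 * (Nat.card (commutator G) : ℝ)) ≤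
      (Nat.card {t : G × G × (commutator G) //
        (t.1⁻¹ * t.2.1⁻¹ * t.1 * t.2.1)⁻¹ * (t.2.2 : G)⁻¹ *
          (t.1⁻¹ * t.2.1⁻¹ * t.1 * t.2.1) * (t.2.2 : G) = 1} : ℝ) := by
  classical
  have _i1 : Fintype G := Fintype.ofFinite G
  have _i2 : Fintype (commutator G) := Fintype.ofFinite _
  -- the commutator condition as a Commute statement
  set a : G → G → G := fun x y => x⁻¹ * y⁻¹ * x * y with ha
  -- counts
  set T : ℕ := (univ.filter fun t : G × G × G => Commute (a t.1 t.2.1) t.2.2).card with hT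
  set Nf : G → ℕ := fun z₀ =>
    (univ.filter fun t : G × G × commutator G =>
      Commute (a t.1 t.2.1) ((t.2.2 : G) * z₀)).card with hNf
  set M : ℕ := (univ.filter fun t : G × G × commutator G =>
      Commute (a t.1 t.2.1) (t.2.2 : G)).card with hM
  -- Nat.card of the statement subtypes equal these counts
  have cardT : (Nat.card {t : G × G × G //
        (t.1⁻¹ * t.2.1⁻¹ * t.1 * t.2.1)⁻¹ * t.2.2⁻¹ *
          (t.1⁻¹ * t.2.1⁻¹ * t.1 * t.2.1) * t.2.2 = 1}) = T := by
    rw [Nat.card_eq_fintype_card, Fintype.card_subtype, hT]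
    congr 1
    apply filter_congr
    intro t _
    exact cond_iff' _ _
  have cardN : ∀ z₀ : G, (Nat.card {t : G × G × (commutator G) //
        (t.1⁻¹ * t.2.1⁻¹ * t.1 * t.2.1)⁻¹ * ((t.2.2 : G) * z₀)⁻¹ *
          (t.1⁻¹ * t.2.1⁻¹ * t.1 * t.2.1) * ((t.2.2 : G) * z₀) = 1}) = Nf z₀ := by
    intro z₀
    rw [Nat.card_eq_fintype_card, Fintype.card_subtype, hNf]
    congr 1
    apply filter_congr
    intro t _
    exact cond_iff' _ _
  have cardM : (Nat.card {t : G × G × (commutator G) //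
        (t.1⁻¹ * t.2.1⁻¹ * t.1 * t.2.1)⁻¹ * (t.2.2 : G)⁻¹ *
          (t.1⁻¹ * t.2.1⁻¹ * t.1 * t.2.1) * (t.2.2 : G) = 1}) = M := by
    rw [Nat.card_eq_fintype_card, Fintype.card_subtype, hM]
    congr 1
    apply filter_congr
    intro t _
    exact cond_iff' _ _
  -- double counting: ∑ z₀, Nf z₀ = card (commutator G) * T
  have hsum : ∑ z₀ : G, Nf z₀ = Fintype.card (commutator G) * T := by
    set S : Finset ((G × G × commutator G) × G) :=
      univ.filter fun q => Commute (a q.1.1 q.1.2.1) ((q.1.2.2 : G) * q.2) with hS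
    have h1 : S.card = ∑ z₀ : G, Nf z₀ := by
      rw [Finset.card_eq_sum_card_fiberwise (t := (univ : Finset G)) (f := Prod.snd)
        (fun x _ => mem_univ _)]
      refine Finset.sum_congr rfl fun z₀ _ => ?_
      simp only [hNf]
      refine Finset.card_nbij' Prod.fst (fun t => (t, z₀)) ?_ ?_ ?_ ?_
      · intro q hq
        simp only [hS, Finset.mem_coe, mem_filter, mem_univ, true_and] at hq ⊢
        rw [← hq.2]; exact hq.1
      · intro t ht
        simp only [hS, Finset.mem_coe, mem_filter, mem_univ, true_and] at ht ⊢
        exact ⟨ht, trivial⟩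
      · intro q hq
        simp only [Finset.mem_coe, mem_filter] at hq
        exact Prod.ext rfl hq.2.symm
      · intro t _; rfl
    have h2 : S.card = T * Fintype.card (commutator G) := by
      have : T * Fintype.card (commutator G) =
          ((univ.filter fun t : G × G × G => Commute (a t.1 t.2.1) t.2.2) ×ˢ
            (univ : Finset (commutator G))).card := by
        rw [Finset.card_product, card_univ, hT]
      rw [this]
      refine Finset.card_nbij'
        (fun q => ((q.1.1, q.1.2.1, (q.1.2.2 : G) * q.2), q.1.2.2))
        (fun p => ((p.1.1, p.1.2.1, p.2), (p.2 : G)⁻¹ * p.1.2.2)) ?_ ?_ ?_ ?_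
      · intro q hq
        simp only [hS, Finset.mem_coe, mem_filter, mem_univ, true_and, mem_product, and_true] at hq ⊢
        exact hq
      · intro p hp
        simp only [hS, Finset.mem_coe, mem_filter, mem_univ, mem_product, true_and, and_true] at hp ⊢
        simpa using hp
      · intro q hq
        simp
      · intro p hp
        simp
    rw [h1] at h2
    rw [h2, Nat.mul_comm]
  -- step C : Nf z₀ ≤ M for every z₀
  have hNM : ∀ z₀ : G, Nf z₀ ≤ M := by
    intro z₀
    set w₁ : G → G → commutator G := fun x y =>
      if h : ∃ w : commutator G, Commute (a x y) ((w : G) * z₀) then h.choose else 1 with hw₁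
    refine Finset.card_le_card_of_injOn
      (fun t => (t.1, t.2.1, t.2.2 * (w₁ t.1 t.2.1)⁻¹)) ?_ ?_
    · intro t ht
      simp only [hNf, Finset.mem_coe, mem_filter, mem_univ, true_and] at ht
      simp only [hM, Finset.mem_coe, mem_filter, mem_univ, true_and]
      have hex : ∃ w : commutator G, Commute (a t.1 t.2.1) ((w : G) * z₀) := ⟨t.2.2, ht⟩
      have hw : Commute (a t.1 t.2.1) ((w₁ t.1 t.2.1 : G) * z₀) := by
        rw [hw₁]; simp only [hex, dif_pos]; exact hex.choose_spec
      have key : Commute (a t.1 t.2.1)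
          (((t.2.2 : G) * z₀) * (((w₁ t.1 t.2.1 : G) * z₀))⁻¹) := ht.mul_right hw.inv_right
      have heq : ((t.2.2 : G) * z₀) * (((w₁ t.1 t.2.1 : G) * z₀))⁻¹ =
          ((t.2.2 * (w₁ t.1 t.2.1)⁻¹ : commutator G) : G) := by
        push_cast
        group
      rwa [heq] at key
    · intro s hs t ht hst
      simp only [Prod.mk.injEq] at hst
      obtain ⟨h1, h2, h3⟩ := hst
      refine Prod.ext h1 (Prod.ext h2 ?_)
      have : s.2.2 * (w₁ s.1 s.2.1)⁻¹ = t.2.2 * (w₁ s.1 s.2.1)⁻¹ := by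
        rw [h3, h1, h2]
      exact mul_right_cancel this
  -- now the numeric part
  rw [cardT] at hd
  have hcard : (Nat.card G : ℝ) = Fintype.card G := by rw [Nat.card_eq_fintype_card]
  have hcardK : (Nat.card (commutator G) : ℝ) = Fintype.card (commutator G) := by
    rw [Nat.card_eq_fintype_card]
  -- ∃ z₀ with the bound
  have hmain : ∃ z₀ : G, ε * ((Nat.card G : ℝ) ^ 2 * (Nat.card (commutator G) : ℝ)) ≤
      (Nf z₀ : ℝ) := by
    have hsumR : ∑ z₀ : G, (Nf z₀ : ℝ) =
        (Fintype.card (commutator G) : ℝ) * T := by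
      rw [← Nat.cast_sum, hsum]; push_cast; ring
    have hbound : ∑ z₀ : G, ε * ((Nat.card G : ℝ) ^ 2 * (Nat.card (commutator G) : ℝ)) ≤
        ∑ z₀ : G, (Nf z₀ : ℝ) := by
      rw [hsumR, Finset.sum_const, card_univ, nsmul_eq_mul]
      calc (Fintype.card G : ℝ) *
            (ε * ((Nat.card G : ℝ) ^ 2 * (Nat.card (commutator G) : ℝ)))
          = (ε * (Nat.card G : ℝ) ^ 3) * (Nat.card (commutator G) : ℝ) := by
            rw [hcard]; ring
        _ ≤ (T : ℝ) * (Nat.card (commutator G) : ℝ) := by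
            apply mul_le_mul_of_nonneg_right hd (by positivity)
        _ = (Fintype.card (commutator G) : ℝ) * T := by rw [hcardK]; ring
    obtain ⟨z₀, _, hz₀⟩ := Finset.exists_le_of_sum_le ⟨1, mem_univ 1⟩ hbound
    exact ⟨z₀, hz₀⟩
  obtain ⟨z₀, hz₀⟩ := hmain
  constructor
  · exact ⟨z₀, by rw [cardN]; exact hz₀⟩
  · rw [cardM]
    calc ε * ((Nat.card G : ℝ) ^ 2 * (Nat.card (commutator G) : ℝ)) ≤ (Nf z₀ : ℝ) := hz₀
      _ ≤ (M : ℝ) := by exact_mod_cast hNM z₀
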